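/- The ideal lattice Id(F₃) of the free lattice on three generators x, y, z fails the meet semidistributive law SD∧: there exist ideals X, Y, Z with X ∧ Y = X ∧ Z but X ∧ (Y ∨ Z) strictly larger. Specifically, with y₀ = y, z₀ = z, y_{k+1} = y ∨ (x ∧ z_k), z_{k+1} = z ∨ (x ∧ y_k), and X = ↓x, Y = ⋃_k ↓y_k, Z = ⋃_k ↓z_k, one has X ∧ Y = X ∧ Z < X ∧ (Y ∨ Z), since x ∧ (y ∨ z) lies in X ∧ (Y ∨ Z) but not in X ∧ Y. -/

import Mathlib

/-- A family `g : ι → F` freely generates the lattice `F`. -/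
def IsFreeLattice {F : Type*} [Lattice F] {ι : Type*} (g : ι → F) : Prop :=
  ∀ {L : Type*} [Lattice L] (f : ι → L), ∃! h : LatticeHom F L, ∀ i, h (g i) = f i

/-- The diamond lattice M₃. -/
inductive M3 : Type
  | bo | a | b | c | to
deriving DecidableEq

instance : Fintype M3 :=
  ⟨{.bo, .a, .b, .c, .to}, fun x => by cases x <;> simp⟩

namespace M3

def le' : M3 → M3 → Bool
  | .bo, _ => true
  | _, .to => true
  | .a, .a => true
  | .b, .b => true
  | .c, .c => true
  | _, _ => false

def sup' : M3 → M3 → M3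
  | .bo, x => x
  | x, .bo => x
  | .to, _ => .to
  | _, .to => .to
  | .a, .a => .a
  | .b, .b => .b
  | .c, .c => .c
  | _, _ => .to

def inf' : M3 → M3 → M3
  | .to, x => x
  | x, .to => x
  | .bo, _ => .bo
  | _, .bo => .bo
  | .a, .a => .a
  | .b, .b => .b
  | .c, .c => .c
  | _, _ => .bo

instance : LE M3 := ⟨fun x y => le' x y = true⟩

instance : DecidableRel ((· ≤ ·) : M3 → M3 → Prop) :=
  fun x y => inferInstanceAs (Decidable (le' x y = true))

instance : Lattice M3 where
  le_refl := by decide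
  le_trans := by decide
  le_antisymm := by decide
  sup := sup'
  le_sup_left := by decide
  le_sup_right := by decide
  sup_le := by decide
  inf := inf'
  inf_le_left := by decide
  inf_le_right := by decide
  le_inf := by decide

end M3

/-- The ideal lattice of the free lattice `F₃` on `x, y, z` fails `SD∧`: with
`y₀ = y`, `z₀ = z`, `y_{k+1} = y ∨ (x ∧ z_k)`, `z_{k+1} = z ∨ (x ∧ y_k)`, and the
ideals `X = ↓x`, `Y = ⋃ₖ ↓y_k`, `Z = ⋃ₖ ↓z_k`, one has
`X ∧ Y = X ∧ Z < X ∧ (Y ∨ Z)`; indeed `x ∧ (y ∨ z)` lies in `X ∧ (Y ∨ Z)` but not in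
`X ∧ Y`. -/
theorem ideal_lattice_fails_SDmeet {F : Type*} [Lattice F] (g : Fin 3 → F)
    (hfree : IsFreeLattice g)
    (x y z : F) (hx : x = g 0) (hy : y = g 1) (hz : z = g 2)
    (Y Z : ℕ → F) (hY0 : Y 0 = y) (hZ0 : Z 0 = z)
    (hYs : ∀ k, Y (k + 1) = y ⊔ (x ⊓ Z k)) (hZs : ∀ k, Z (k + 1) = z ⊔ (x ⊓ Y k)) :
    ({w : F | w ≤ x} ∩ {w : F | ∃ k, w ≤ Y k} = {w : F | w ≤ x} ∩ {w : F | ∃ k, w ≤ Z k}) ∧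
    ({w : F | w ≤ x} ∩ {w : F | ∃ k, w ≤ Y k}
        ⊂ {w : F | w ≤ x} ∩ {w : F | ∃ j k, w ≤ Y j ⊔ Z k}) ∧
    (x ⊓ (y ⊔ z) ∈ {w : F | w ≤ x} ∩ {w : F | ∃ j k, w ≤ Y j ⊔ Z k}) ∧
    (x ⊓ (y ⊔ z) ∉ {w : F | w ≤ x} ∩ {w : F | ∃ k, w ≤ Y k}) := by
  -- obtain the lattice hom to M3
  obtain ⟨h, hg, -⟩ := hfree (L := ULift M3) ![ULift.up M3.a, ULift.up M3.b, ULift.up M3.c]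
  have hxa : h x = ULift.up M3.a := by rw [hx]; exact hg 0
  have hyb : h y = ULift.up M3.b := by rw [hy]; exact hg 1
  have hzc : h z = ULift.up M3.c := by rw [hz]; exact hg 2
  have key : ∀ k, h (Y k) = ULift.up M3.b ∧ h (Z k) = ULift.up M3.c := by
    intro k
    induction k with
    | zero => simp [hY0, hZ0, hyb, hzc]
    | succ n ih =>
      constructor
      · rw [hYs n, map_sup, map_inf, hyb, hxa, ih.2]; rfl
      · rw [hZs n, map_sup, map_inf, hzc, hxa, ih.1]; rfl
  -- part 4 : x ⊓ (y ⊔ z) not in X ∧ Y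
  have notin : x ⊓ (y ⊔ z) ∉ {w : F | w ≤ x} ∩ {w : F | ∃ k, w ≤ Y k} := by
    rintro ⟨-, k, hk⟩
    have := OrderHomClass.monotone h hk
    rw [map_inf, map_sup, hxa, hyb, hzc, (key k).1] at this
    exact absurd (ULift.up_le.mp this) (by decide)
  -- part 1 : equality
  have heq : ({w : F | w ≤ x} ∩ {w : F | ∃ k, w ≤ Y k}
      = {w : F | w ≤ x} ∩ {w : F | ∃ k, w ≤ Z k}) := by
    ext w
    constructor
    · rintro ⟨hwx, k, hwk⟩
      exact ⟨hwx, k + 1, le_trans (le_inf hwx hwk) (by rw [hZs k]; exact le_sup_right)⟩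
    · rintro ⟨hwx, k, hwk⟩
      exact ⟨hwx, k + 1, le_trans (le_inf hwx hwk) (by rw [hYs k]; exact le_sup_right)⟩
  have hmem : x ⊓ (y ⊔ z) ∈ {w : F | w ≤ x} ∩ {w : F | ∃ j k, w ≤ Y j ⊔ Z k} :=
    ⟨inf_le_left, 0, 0, by rw [hY0, hZ0]; exact inf_le_right⟩
  refine ⟨heq, ⟨?_, ?_⟩, hmem, notin⟩
  · rintro w ⟨hwx, k, hwk⟩
    exact ⟨hwx, k, 0, le_trans hwk le_sup_left⟩
  · intro hsub
    exact notin (hsub hmem)
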